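/- Let (B, L, θ) be a Boolean dynamical system with B ≠ {∅}. Then (B, L, θ) has a maximal tail. -/

import Mathlib

namespace BoolDyn

variable {X L : Type*}

section Defs

variable [GeneralizedBooleanAlgebra X]

/-- A map `X → X` is an action on the generalized Boolean algebra `X` if it preserves
`⊥`, `⊔`, `⊓` and `\`. -/
def IsBoolAction (f : X → X) : Prop :=
  f ⊥ = ⊥ ∧ (∀ a b : X, f (a ⊔ b) = f a ⊔ f b) ∧ (∀ a b : X, f (a ⊓ b) = f a ⊓ f b) ∧
    ∀ a b : X, f (a \ b) = f a \ f b

/-- `θ_β := θ_{β_n} ∘ ⋯ ∘ θ_{β_1}` for a word `β = β_1 ⋯ β_n ∈ L^*`, with `θ_∅ = id`. -/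
def thetaWord (θ : L → X → X) (β : List L) (a : X) : X :=
  β.foldl (fun x α => θ α x) a

/-- `Δ_a := {α ∈ L : θ_α(a) ≠ ∅}`. -/
def Delta (θ : L → X → X) (a : X) : Set L := {α : L | θ α a ≠ ⊥}

/-- `a` is regular if `0 < |Δ_b| < ∞` for every nonempty `b ⊆ a`. -/
def IsRegularElem (θ : L → X → X) (a : X) : Prop :=
  ∀ b : X, b ≤ a → b ≠ ⊥ → (Delta θ b).Finite ∧ (Delta θ b).Nonempty

/-- `B_reg`, the set of regular elements. -/
def regSet (θ : L → X → X) : Set X := {a : X | IsRegularElem θ a}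

/-- An ideal of a generalized Boolean algebra: a nonempty subset closed under `⊔` and
downward closed under `≤`. -/
structure IsIdeal (I : Set X) : Prop where
  nonempty : I.Nonempty
  sup_mem : ∀ ⦃a b : X⦄, a ∈ I → b ∈ I → a ⊔ b ∈ I
  lower : ∀ ⦃a b : X⦄, a ∈ I → b ≤ a → b ∈ I

/-- A hereditary subset: closed under all the actions. -/
def Hereditary (θ : L → X → X) (H : Set X) : Prop := ∀ a ∈ H, ∀ α : L, θ α a ∈ H

/-- Saturated: `a ∈ H` whenever `a` is regular and `θ_α(a) ∈ H` for every `α ∈ Δ_a`. -/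
def Saturated (θ : L → X → X) (H : Set X) : Prop :=
  ∀ a : X, IsRegularElem θ a → (∀ α ∈ Delta θ a, θ α a ∈ H) → a ∈ H

/-- `J`-saturated: `a ∈ H` whenever `a ∈ J` and `θ_α(a) ∈ H` for every `α ∈ Δ_a`. -/
def JSaturated (θ : L → X → X) (J H : Set X) : Prop :=
  ∀ a ∈ J, (∀ α ∈ Delta θ a, θ α a ∈ H) → a ∈ H

/-- A cycle: `β` nonempty, `a ≠ ∅`, and `θ_β(b) = b` for every `b ⊆ a`. -/
def IsCycle (θ : L → X → X) (β : List L) (a : X) : Prop :=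
  β ≠ [] ∧ a ≠ ⊥ ∧ ∀ b : X, b ≤ a → thetaWord θ β b = b

/-- `(β, a)` has no exits: for every `t ∈ {1,…,n}` and every nonempty `b ⊆ θ_{β_{1,t}}(a)`,
`b` is regular and `Δ_b = {β_{t+1}}` (with `β_{n+1} := β_1`). -/
def NoExits (θ : L → X → X) (β : List L) (a : X) : Prop :=
  ∀ t : ℕ, 1 ≤ t → t ≤ β.length →
    ∀ b : X, b ≤ thetaWord θ (β.take t) a → b ≠ ⊥ →
      IsRegularElem θ b ∧ Delta θ b = {α : L | β[t % β.length]? = some α}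

/-- Condition (L): there is no cycle with no exits. -/
def CondL (θ : L → X → X) : Prop :=
  ¬ ∃ (β : List L) (a : X), IsCycle θ β a ∧ NoExits θ β a

/-- A filter of a generalized Boolean algebra. -/
structure IsBoolFilter (F : Set X) : Prop where
  nonempty : F.Nonempty
  bot_not_mem : ⊥ ∉ F
  inf_mem : ∀ ⦃a b : X⦄, a ∈ F → b ∈ F → a ⊓ b ∈ F
  upper : ∀ ⦃a b : X⦄, a ∈ F → a ≤ b → b ∈ F

/-- An ultrafilter: a maximal filter. -/
def IsUltra (F : Set X) : Prop :=
  IsBoolFilter F ∧ ∀ G : Set X, IsBoolFilter G → F ⊆ G → G = F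

/-- A filter of the ideal `I`, viewed as a generalized Boolean algebra in its own right. -/
structure IsFilterOn (I F : Set X) : Prop where
  subset : F ⊆ I
  nonempty : F.Nonempty
  bot_not_mem : ⊥ ∉ F
  inf_mem : ∀ ⦃a b : X⦄, a ∈ F → b ∈ F → a ⊓ b ∈ F
  upper : ∀ a b : X, a ∈ F → b ∈ I → a ≤ b → b ∈ F

/-- An ultrafilter of the ideal `I`: a maximal filter of `I`. -/
def IsUltraOn (I F : Set X) : Prop :=
  IsFilterOn I F ∧ ∀ G : Set X, IsFilterOn I G → F ⊆ G → G = F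

/-- `R_α := {a ∈ B : a ≤ θ_α(c) for some c ∈ B}`. -/
def Rset (θ : L → X → X) (α : L) : Set X := {a : X | ∃ c : X, a ≤ θ α c}

/-- `β^k`, the `k`-fold concatenation of the word `β`. -/
def wordPow (β : List L) : ℕ → List L
  | 0 => []
  | k + 1 => β ++ wordPow β k

/-- An ultrafilter cycle. -/
def UltrafilterCycle (θ : L → X → X) (β : List L) (η : Set X) : Prop :=
  β ≠ [] ∧ IsUltra η ∧ ∀ a ∈ η, thetaWord θ β a ∈ η

/-- A maximal tail. -/
structure MaximalTail (θ : L → X → X) (T : Set X) : Prop where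
  nonempty : T.Nonempty
  not_bot_mem : ⊥ ∉ T
  t2 : ∀ (a : X) (α : L), θ α a ∈ T → a ∈ T
  t3 : ∀ a b : X, a ⊔ b ∈ T → a ∈ T ∨ b ∈ T
  t4 : ∀ a b : X, a ∈ T → a ≤ b → b ∈ T
  t5 : ∀ a : X, a ∈ T → IsRegularElem θ a → ∃ α : L, θ α a ∈ T
  t6 : ∀ a b : X, a ∈ T → b ∈ T →
    ∃ β γ : List L, thetaWord θ β a ⊓ thetaWord θ γ b ∈ T

/-- A cyclic (maximal) tail. -/
def CyclicTail (θ : L → X → X) (T : Set X) : Prop :=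
  ∃ (β : List L) (η : Set X), UltrafilterCycle θ β η ∧
    T = {b : X | ∃ γ : List L, thetaWord θ γ b ∈ η} ∧
    ∃ A ∈ η, ∀ γ : List L, γ ≠ [] → ∀ b : X, b ≤ A → thetaWord θ γ b ∈ η →
      b ∈ η ∧ ∃ k : ℕ, 0 < k ∧ γ = wordPow β k

/-- Condition (K). -/
def CondK (θ : L → X → X) : Prop :=
  ¬ ∃ (β : List L) (η : Set X) (A : X), UltrafilterCycle θ β η ∧ A ∈ η ∧
    ∀ γ : List L, γ ≠ [] → ∀ b : X, b ≤ A → thetaWord θ γ b ∈ η →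
      b ∈ η ∧ ∃ k : ℕ, 0 < k ∧ γ = wordPow β k

/-- `H(A) = {b : b ≤ ⋃_{β ∈ F} θ_β(A) for some finite F ⊆ L^*}`. -/
def HA (θ : L → X → X) (A : X) : Set X :=
  {b : X | ∃ F : Finset (List L), b ≤ F.sup fun β => thetaWord θ β A}

/-- `I₁ ⊕ I₂`, the smallest ideal containing the ideals `I₁` and `I₂`. -/
def oplus (I₁ I₂ : Set X) : Set X := {c : X | ∃ a ∈ I₁, ∃ b ∈ I₂, c = a ⊔ b}

/-- `S(H(A))`. -/
def SHA (θ : L → X → X) (A : X) : Set X :=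
  {b : X | ∃ n : ℕ, (∀ β : List L, β.length = n → thetaWord θ β b ∈ HA θ A) ∧
    ∀ γ : List L, γ.length < n → thetaWord θ γ b ∈ oplus (HA θ A) (regSet θ)}

/-- Minimality: `{∅}` and `B` are the only saturated hereditary ideals. -/
def Minimal (θ : L → X → X) : Prop :=
  ∀ H : Set X, IsIdeal H → Hereditary θ H → Saturated θ H → H = {⊥} ∨ H = Set.univ

end Defs

end BoolDyn

open BoolDyn


section Aux

variable {X L : Type*} [GeneralizedBooleanAlgebra X] {θ : L → X → X}

theorem tw_cons (θ : L → X → X) (α : L) (β : List L) (a : X) :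
    thetaWord θ (α :: β) a = thetaWord θ β (θ α a) := rfl

theorem tw_append (θ : L → X → X) (β γ : List L) (a : X) :
    thetaWord θ (β ++ γ) a = thetaWord θ γ (thetaWord θ β a) :=
  List.foldl_append

theorem tw_bot (hθ : ∀ α : L, IsBoolAction (θ α)) (β : List L) :
    thetaWord θ β (⊥ : X) = ⊥ := by
  induction β with
  | nil => rfl
  | cons α β ih => rw [tw_cons, (hθ α).1, ih]

theorem tw_sup (hθ : ∀ α : L, IsBoolAction (θ α)) (β : List L) (a b : X) :
    thetaWord θ β (a ⊔ b) = thetaWord θ β a ⊔ thetaWord θ β b := by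
  induction β generalizing a b with
  | nil => rfl
  | cons α β ih => rw [tw_cons, (hθ α).2.1, ih, tw_cons, tw_cons]

theorem tw_inf (hθ : ∀ α : L, IsBoolAction (θ α)) (β : List L) (a b : X) :
    thetaWord θ β (a ⊓ b) = thetaWord θ β a ⊓ thetaWord θ β b := by
  induction β generalizing a b with
  | nil => rfl
  | cons α β ih => rw [tw_cons, (hθ α).2.2.1, ih, tw_cons, tw_cons]

theorem tw_mono (hθ : ∀ α : L, IsBoolAction (θ α)) (β : List L) {a b : X}
    (h : a ≤ b) : thetaWord θ β a ≤ thetaWord θ β b := by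
  have : thetaWord θ β a ⊔ thetaWord θ β b = thetaWord θ β b := by
    rw [← tw_sup hθ, sup_eq_right.mpr h]
  exact le_sup_left.trans this.le

theorem regular_mono {a b : X} (h : IsRegularElem θ a) (hb : b ≤ a) :
    IsRegularElem θ b := fun c hc => h c (hc.trans hb)

/-- Saturated hereditary ideal. -/
structure SHIdeal (θ : L → X → X) (H : Set X) : Prop where
  bot : (⊥ : X) ∈ H
  sup : ∀ ⦃a b : X⦄, a ∈ H → b ∈ H → a ⊔ b ∈ H
  lower : ∀ ⦃a b : X⦄, a ∈ H → b ≤ a → b ∈ H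
  hered : ∀ a ∈ H, ∀ α : L, θ α a ∈ H
  sat : Saturated θ H

theorem SHIdeal.tw_mem {H : Set X} (hH : SHIdeal θ H) {a : X} (ha : a ∈ H)
    (β : List L) : thetaWord θ β a ∈ H := by
  induction β generalizing a with
  | nil => exact ha
  | cons α β ih => exact ih (hH.hered a ha α)

/-- The key auxiliary set. -/
def Kset (θ : L → X → X) (H : Set X) (b : X) : Set X :=
  {c : X | ∀ δ γ : List L, thetaWord θ δ c ⊓ thetaWord θ γ b ∈ H}

theorem subset_Kset {H : Set X} (hH : SHIdeal θ H) (b : X) : H ⊆ Kset θ H b :=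
  fun c hc δ γ => hH.lower (hH.tw_mem hc δ) inf_le_left

theorem SHIdeal_Kset (hθ : ∀ α : L, IsBoolAction (θ α)) {H : Set X}
    (hH : SHIdeal θ H) (b : X) : SHIdeal θ (Kset θ H b) where
  bot := fun δ γ => by rw [tw_bot hθ, bot_inf_eq]; exact hH.bot
  sup := fun c c' hc hc' δ γ => by
    rw [tw_sup hθ, inf_sup_right]
    exact hH.sup (hc δ γ) (hc' δ γ)
  lower := fun c c' hc hcc' δ γ =>
    hH.lower (hc δ γ) (inf_le_inf_right _ (tw_mono hθ δ hcc'))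
  hered := fun c hc α δ γ => hc (α :: δ) γ
  sat := by
    intro c hreg hc δ γ
    match δ with
    | [] =>
      -- show c ⊓ thetaWord θ γ b ∈ H using saturation of H
      refine hH.sat _ (regular_mono hreg inf_le_left) ?_
      intro α hα
      have hαc : α ∈ Delta θ c := by
        intro h0
        apply hα
        have : θ α (c ⊓ thetaWord θ γ b) ≤ θ α c := by
          rw [(hθ α).2.2.1]; exact inf_le_left
        rw [h0] at this
        exact le_bot_iff.mp this
      have h2 := hc α hαc [] (γ ++ [α])
      rw [tw_append] at h2
      rw [(hθ α).2.2.1]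
      exact h2
    | α :: δ' =>
      rw [tw_cons]
      by_cases hαc : α ∈ Delta θ c
      · exact hc α hαc δ' γ
      · have h0 : θ α c = ⊥ := not_not.mp hαc
        rw [h0, tw_bot hθ, bot_inf_eq]
        exact hH.bot

theorem chain_finite_bound {c : Set (Set X)} (hc : IsChain (· ⊆ ·) c)
    (hne : c.Nonempty) {ι : Type*} {s : Set ι} (hs : s.Finite) (g : ι → X)
    (h : ∀ i ∈ s, ∃ M ∈ c, g i ∈ M) : ∃ M ∈ c, ∀ i ∈ s, g i ∈ M := by
  induction s, hs using Set.Finite.induction_on with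
  | empty => exact hne.imp fun M hM => ⟨hM, by simp⟩
  | @insert i s hi hsf ih =>
    obtain ⟨M, hM, hMs⟩ := ih fun j hj => h j (Set.mem_insert_of_mem _ hj)
    obtain ⟨N, hN, hNi⟩ := h i (Set.mem_insert _ _)
    rcases hc.total hM hN with hMN | hNM
    · exact ⟨N, hN, fun j hj => by
        rcases Set.mem_insert_iff.mp hj with rfl | hj
        · exact hNi
        · exact hMN (hMs j hj)⟩
    · exact ⟨M, hM, fun j hj => by
        rcases Set.mem_insert_iff.mp hj with rfl | hj
        · exact hNM hNi
        · exact hMs j hj⟩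

end Aux


/-- **Statement 11.** A Boolean dynamical system with `B ≠ {∅}` has a maximal tail. -/
theorem exists_maximalTail
    {X L : Type*} [GeneralizedBooleanAlgebra X] (θ : L → X → X)
    (hθ : ∀ α : L, IsBoolAction (θ α))
    (hX : ∃ a : X, a ≠ ⊥) :
    ∃ T : Set X, MaximalTail θ T := by
  classical
  obtain ⟨a₀, ha₀⟩ := hX
  set 𝒮 : Set (Set X) := {H | SHIdeal θ H ∧ a₀ ∉ H} with h𝒮
  -- `{⊥}` is a saturated hereditary ideal avoiding `a₀`
  have hbot : ({⊥} : Set X) ∈ 𝒮 := by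
    refine ⟨⟨rfl, ?_, ?_, ?_, ?_⟩, by simpa using ha₀⟩
    · intro a b ha hb
      rw [Set.mem_singleton_iff] at ha hb ⊢
      rw [ha, hb, sup_idem]
    · intro a b ha hb
      rw [Set.mem_singleton_iff] at ha ⊢
      exact le_bot_iff.mp (ha ▸ hb)
    · intro a ha α
      rw [Set.mem_singleton_iff] at ha ⊢
      rw [ha, (hθ α).1]
    · intro a hreg ha
      rw [Set.mem_singleton_iff]
      by_contra hne
      obtain ⟨-, α, hα⟩ := hreg a le_rfl hne
      exact hα (ha α hα)
  -- Zorn's lemma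
  have hzorn : ∀ c ⊆ 𝒮, IsChain (· ⊆ ·) c → c.Nonempty →
      ∃ ub ∈ 𝒮, ∀ s ∈ c, s ⊆ ub := by
    intro c hc𝒮 hchain hcne
    refine ⟨⋃₀ c, ⟨⟨?_, ?_, ?_, ?_, ?_⟩, ?_⟩, fun s hs => Set.subset_sUnion_of_mem hs⟩
    · obtain ⟨M, hM⟩ := hcne
      exact ⟨M, hM, (hc𝒮 hM).1.bot⟩
    · rintro a b ⟨M, hM, haM⟩ ⟨N, hN, hbN⟩
      rcases hchain.total hM hN with h | h
      · exact ⟨N, hN, (hc𝒮 hN).1.sup (h haM) hbN⟩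
      · exact ⟨M, hM, (hc𝒮 hM).1.sup haM (h hbN)⟩
    · rintro a b ⟨M, hM, haM⟩ hba
      exact ⟨M, hM, (hc𝒮 hM).1.lower haM hba⟩
    · rintro a ⟨M, hM, haM⟩ α
      exact ⟨M, hM, (hc𝒮 hM).1.hered a haM α⟩
    · intro a hreg ha
      by_cases hane : a = ⊥
      · obtain ⟨M, hM⟩ := hcne
        exact ⟨M, hM, hane ▸ (hc𝒮 hM).1.bot⟩
      · have hfin : (Delta θ a).Finite := (hreg a le_rfl hane).1
        obtain ⟨M, hM, hMall⟩ := chain_finite_bound hchain hcne hfin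
          (fun α => θ α a) ha
        exact ⟨M, hM, (hc𝒮 hM).1.sat a hreg hMall⟩
    · rintro ⟨M, hM, haM⟩
      exact (hc𝒮 hM).2 haM
  obtain ⟨H, -, hHmax⟩ := zorn_subset_nonempty 𝒮 hzorn _ hbot
  have hH : SHIdeal θ H := hHmax.prop.1
  have ha₀H : a₀ ∉ H := hHmax.prop.2
  -- key consequence of maximality
  have key : ∀ (K : Set X), SHIdeal θ K → H ⊆ K → ∀ a : X, a ∉ H → a ∈ K → a₀ ∈ K := by
    intro K hK hHK a haH haK
    by_contra ha₀K
    exact haH (hHmax.2 ⟨hK, ha₀K⟩ hHK haK)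
  refine ⟨Hᶜ, ?_, ?_, ?_, ?_, ?_, ?_, ?_⟩
  · exact ⟨a₀, ha₀H⟩
  · simpa using hH.bot
  · intro a α h ha
    exact h (hH.hered a ha α)
  · intro a b hab
    by_contra h
    push_neg at h
    obtain ⟨h1, h2⟩ := h
    rw [Set.notMem_compl_iff] at h1 h2
    exact hab (hH.sup h1 h2)
  · intro a b ha hab hb
    exact ha (hH.lower hb hab)
  · intro a ha hreg
    by_contra h
    push_neg at h
    refine ha (hH.sat a hreg fun α _ => ?_)
    have := h α
    rwa [Set.notMem_compl_iff] at this
  · intro a b ha hb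
    by_contra h
    push_neg at h
    have hab : ∀ δ γ : List L, thetaWord θ δ a ⊓ thetaWord θ γ b ∈ H := by
      intro δ γ
      have := h δ γ
      rwa [Set.notMem_compl_iff] at this
    have ha₀Kb : a₀ ∈ Kset θ H b :=
      key _ (SHIdeal_Kset hθ hH b) (subset_Kset hH b) a ha hab
    have hbKa₀ : b ∈ Kset θ H a₀ := by
      intro δ γ
      rw [inf_comm]
      exact ha₀Kb γ δ
    have ha₀Ka₀ : a₀ ∈ Kset θ H a₀ :=
      key _ (SHIdeal_Kset hθ hH a₀) (subset_Kset hH a₀) b hb hbKa₀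
    have := ha₀Ka₀ [] []
    rw [show thetaWord θ [] a₀ = a₀ from rfl, inf_idem] at this
    exact ha₀H this
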